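/- Suppose V is infinite-dimensional. Then for every X ∈ 𝒢 and every natural number d there exists Y ∈ 𝒢 with dim(X/(X ∩ Y)) = dim(Y/(X ∩ Y)) = d, so that the graph distance between X and Y in the Grassmann graph equals d; consequently, every connected component of the Grassmann graph on 𝒢 has infinite diameter. -/

import Mathlib

open Submodule

/-- `X` belongs to the Grassmannian 𝒢: `X` is isomorphic (as a `K`-vector space)
to the quotient `V ⧸ X`, equivalently to one (hence every) complement of `X`. -/
def InG (K V : Type*) [DivisionRing K] [AddCommGroup V] [Module K V]
    (X : Submodule K V) : Prop :=
  Nonempty (X ≃ₗ[K] (V ⧸ X))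

/-- `quotRank K V A B` is the dimension of the quotient space `B / (A ∩ B)`,
where `A ∩ B` is viewed as a subspace of `B`.  For `A ≤ B` this is `dim (B/A)`. -/
noncomputable def quotRank (K V : Type*) [DivisionRing K] [AddCommGroup V] [Module K V]
    (A B : Submodule K V) : Cardinal :=
  Module.rank K (↥B ⧸ (A.comap B.subtype))

/-- `X` and `Y` are adjacent: `dim ((X+Y)/X) = dim ((X+Y)/Y) = 1`. -/
def Adjacent (K V : Type*) [DivisionRing K] [AddCommGroup V] [Module K V]
    (X Y : Submodule K V) : Prop :=
  quotRank K V X (X ⊔ Y) = 1 ∧ quotRank K V Y (X ⊔ Y) = 1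

/-- The distant graph on 𝒢: vertices are the elements of 𝒢, edges the pairs of
(distinct) complementary subspaces. -/
def distantGraph (K V : Type*) [DivisionRing K] [AddCommGroup V] [Module K V] :
    SimpleGraph {X : Submodule K V // InG K V X} where
  Adj X Y := X ≠ Y ∧ IsCompl X.1 Y.1
  symm := ⟨fun _ _ h => ⟨h.1.symm, h.2.symm⟩⟩
  loopless := ⟨fun _ h => h.1 rfl⟩

/-- The Grassmann graph on 𝒢: vertices are the elements of 𝒢, edges the pairs of
adjacent subspaces. -/
def grassmannGraph (K V : Type*) [DivisionRing K] [AddCommGroup V] [Module K V] :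
    SimpleGraph {X : Submodule K V // InG K V X} where
  Adj X Y := Adjacent K V X.1 Y.1
  symm := by
    constructor
    intro X Y h
    obtain ⟨h1, h2⟩ := h
    refine ⟨?_, ?_⟩ <;> rw [sup_comm]
    exacts [h2, h1]
  loopless := by
    constructor
    intro X h
    obtain ⟨h1, -⟩ := h
    rw [quotRank, sup_idem, comap_subtype_self] at h1
    have : Subsingleton (↥X.1 ⧸ (⊤ : Submodule K ↥X.1)) :=
      Submodule.Quotient.subsingleton_iff.mpr rfl
    rw [rank_subsingleton'] at h1
    exact zero_ne_one h1

open Cardinal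

variable {K : Type u} {V : Type v} [DivisionRing K] [AddCommGroup V] [Module K V]

theorem quotRank_eq_rank_map (A B : Submodule K V) :
    quotRank K V A B = Module.rank K ↥(B.map A.mkQ) := by
  have h1 : LinearMap.ker (A.mkQ ∘ₗ B.subtype) = A.comap B.subtype := by
    rw [LinearMap.ker_comp, Submodule.ker_mkQ]
  have h2 : LinearMap.range (A.mkQ ∘ₗ B.subtype) = B.map A.mkQ := by
    rw [LinearMap.range_comp, Submodule.range_subtype]
  have e := (Submodule.quotEquivOfEq _ _ h1.symm).trans
    ((A.mkQ ∘ₗ B.subtype).quotKerEquivRange.trans (LinearEquiv.ofEq _ _ h2))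
  exact e.rank_eq

theorem quotRank_inf_left (A B : Submodule K V) :
    quotRank K V A B = quotRank K V (A ⊓ B) B := by
  have h : A.comap B.subtype = (A ⊓ B).comap B.subtype := by
    ext ⟨x, hx⟩
    simp [Submodule.mem_comap, hx]
  rw [quotRank, quotRank, h]

theorem quotRank_of_compl {A B C : Submodule K V} (h1 : A ⊔ C = B) (h2 : Disjoint A C) :
    quotRank K V A B = Module.rank K ↥C := by
  rw [quotRank_eq_rank_map]
  have hA : A.map A.mkQ = ⊥ := by
    rw [eq_bot_iff]
    refine Submodule.map_le_iff_le_comap.mpr ?_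
    intro x hx
    simpa [Submodule.mem_comap] using hx
  have hB : B.map A.mkQ = C.map A.mkQ := by
    rw [← h1, Submodule.map_sup, hA, bot_sup_eq]
  rw [hB]
  have hinj : Function.Injective (A.mkQ ∘ₗ C.subtype) := by
    rw [← LinearMap.ker_eq_bot, LinearMap.ker_comp, Submodule.ker_mkQ]
    exact Submodule.disjoint_iff_comap_eq_bot.mp h2.symm
  have e := (LinearEquiv.ofInjective (A.mkQ ∘ₗ C.subtype) hinj).symm.trans
    (LinearEquiv.refl K _)
  have hr : LinearMap.range (A.mkQ ∘ₗ C.subtype) = C.map A.mkQ := by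
    rw [LinearMap.range_comp, Submodule.range_subtype]
  calc Module.rank K ↥(C.map A.mkQ) = Module.rank K ↥(LinearMap.range (A.mkQ ∘ₗ C.subtype)) := by rw [hr]
    _ = Module.rank K ↥C := ((LinearEquiv.ofInjective _ hinj).symm).rank_eq

theorem quotRank_mono_right {A B B' : Submodule K V} (h : B' ≤ B) :
    quotRank K V A B' ≤ quotRank K V A B := by
  rw [quotRank_eq_rank_map, quotRank_eq_rank_map]
  exact Submodule.rank_mono (Submodule.map_mono h)

theorem quotRank_mono_left {A A' B : Submodule K V} (h : A' ≤ A) :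
    quotRank K V A B ≤ quotRank K V A' B := by
  rw [quotRank_eq_rank_map, quotRank_eq_rank_map]
  have hcomp : B.map A.mkQ = (B.map A'.mkQ).map (Submodule.mapQ A' A LinearMap.id h) := by
    rw [← Submodule.map_comp, Submodule.mapQ_mkQ]
    rfl
  rw [hcomp]
  exact rank_map_le _ _

theorem quotRank_le_add {A A' B : Submodule K V} (h : A' ≤ A) :
    quotRank K V A' B ≤ quotRank K V A B + quotRank K V A' A := by
  classical
  set f := Submodule.mapQ A' A LinearMap.id h with hf
  set P := B.map A'.mkQ with hP
  set g := f ∘ₗ P.subtype with hg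
  have hrange : LinearMap.range g = B.map A.mkQ := by
    rw [hg, LinearMap.range_comp, Submodule.range_subtype, hP, ← Submodule.map_comp,
      Submodule.mapQ_mkQ]
    rfl
  have hkerf : LinearMap.ker f ≤ A.map A'.mkQ := by
    intro y hy
    obtain ⟨x, rfl⟩ := A'.mkQ_surjective y
    have hx : A.mkQ x = 0 := by
      simpa [hf, Submodule.mapQ_apply] using hy
    exact ⟨x, by simpa using hx, rfl⟩
  have hker : LinearMap.ker g = (LinearMap.ker f ⊓ P).comap P.subtype := by
    rw [hg, LinearMap.ker_comp]
    ext ⟨x, hx⟩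
    simp [Submodule.mem_comap, hx]
  have hk1 : Module.rank K ↥(LinearMap.ker g) ≤ quotRank K V A' A := by
    rw [hker]
    have e := Submodule.comapSubtypeEquivOfLe (inf_le_right : LinearMap.ker f ⊓ P ≤ P)
    rw [e.rank_eq, quotRank_eq_rank_map]
    exact Submodule.rank_mono (le_trans inf_le_left hkerf)
  have hmain := LinearMap.rank_range_add_rank_ker g
  rw [hrange] at hmain
  rw [quotRank_eq_rank_map A' B, ← hP, ← hmain, quotRank_eq_rank_map]
  exact add_le_add le_rfl hk1


theorem quotRank_self (A : Submodule K V) : quotRank K V A A = 0 := by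
  rw [quotRank, comap_subtype_self]
  have : Subsingleton (↥A ⧸ (⊤ : Submodule K ↥A)) :=
    Submodule.Quotient.subsingleton_iff.mpr rfl
  rw [rank_subsingleton']

theorem quotRank_step {A C X : Submodule K V} (hadj : Adjacent K V A C) :
    quotRank K V A X ≤ quotRank K V C X + 1 := by
  have h1 : quotRank K V A X ≤ quotRank K V (A ⊓ C) X :=
    quotRank_mono_left inf_le_left
  have h2 : quotRank K V (A ⊓ C) X ≤ quotRank K V C X + quotRank K V (A ⊓ C) C :=
    quotRank_le_add inf_le_right
  have h3 : quotRank K V (A ⊓ C) C = quotRank K V A C := (quotRank_inf_left A C).symm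
  have h4 : quotRank K V A C ≤ quotRank K V A (A ⊔ C) := quotRank_mono_right le_sup_right
  calc quotRank K V A X ≤ quotRank K V C X + quotRank K V (A ⊓ C) C := h1.trans h2
    _ = quotRank K V C X + quotRank K V A C := by rw [h3]
    _ ≤ quotRank K V C X + 1 := add_le_add le_rfl (h4.trans_eq hadj.1)

theorem quotRank_le_walk_length {A B : {X : Submodule K V // InG K V X}}
    (p : (grassmannGraph K V).Walk A B) : quotRank K V A.1 B.1 ≤ p.length := by
  induction p with
  | nil => simp [quotRank_self]
  | @cons u v w h p ih =>
    have step : quotRank K V u.1 w.1 ≤ quotRank K V v.1 w.1 + 1 := quotRank_step h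
    calc quotRank K V u.1 w.1 ≤ quotRank K V v.1 w.1 + 1 := step
      _ ≤ (p.length : Cardinal) + 1 := add_le_add ih le_rfl
      _ = ((p.length + 1 : ℕ) : Cardinal) := by push_cast; ring
      _ = _ := by simp [SimpleGraph.Walk.length_cons]

theorem rank_span_image {ι : Type v} {v : ι → V} (hv : LinearIndependent K v) (s : Set ι) :
    Module.rank K ↥(span K (v '' s)) = #s := by
  have h1 : LinearIndependent K (v ∘ (Subtype.val : s → ι)) := hv.comp _ Subtype.val_injective
  have h2 : Set.range (v ∘ (Subtype.val : s → ι)) = v '' s := by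
    rw [Set.range_comp, Subtype.range_coe]
  rw [← h2, rank_span h1, Cardinal.mk_range_eq _ h1.injective]

theorem span_disjoint {ι : Type v} {v : ι → V} (hv : LinearIndependent K v) {s t : Set ι}
    (h : Disjoint s t) : Disjoint (span K (v '' s)) (span K (v '' t)) :=
  hv.disjoint_span_image h

theorem mk_image_univ_fin {n : ℕ} {α : Type v} (g : Fin n ↪ α) :
    #(g '' Set.univ : Set α) = n := by
  rw [Set.image_univ]
  have h := Cardinal.mk_range_eq_of_injective g.injective
  rwa [Cardinal.lift_uzero, Cardinal.mk_fin, Cardinal.lift_natCast] at h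

theorem card_cancel {a b κ : Cardinal} (h : a + b = κ) (hb : b < Cardinal.aleph0)
    (hκ : Cardinal.aleph0 ≤ κ) : a = κ := by
  rcases lt_or_ge a Cardinal.aleph0 with ha | ha
  · exact absurd (h ▸ Cardinal.add_lt_aleph0 ha hb) (not_lt.mpr hκ)
  · rw [← h, Cardinal.add_eq_left ha (hb.le.trans ha)]

theorem exists_Y (hV : ¬ FiniteDimensional K V) (X : Submodule K V) (hX : InG K V X) (d : ℕ) :
    ∃ Y : Submodule K V, ∃ hY : InG K V Y,
      quotRank K V Y X = (d : ℕ) ∧ quotRank K V X Y = (d : ℕ) ∧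
      (grassmannGraph K V).Reachable ⟨X, hX⟩ ⟨Y, hY⟩ ∧
      (grassmannGraph K V).dist ⟨X, hX⟩ ⟨Y, hY⟩ = d := by
  classical
  have eX := hX.some
  -- X is infinite dimensional
  have hκ0 : Cardinal.aleph0 ≤ Module.rank K ↥X := by
    by_contra hlt
    push_neg at hlt
    have h2 : Module.rank K (V ⧸ X) < Cardinal.aleph0 := eX.rank_eq ▸ hlt
    have : Module.rank K V < Cardinal.aleph0 := by
      rw [← Submodule.rank_quotient_add_rank X]
      exact Cardinal.add_lt_aleph0 h2 hlt
    exact hV (IsNoetherian.iff_fg.1 (IsNoetherian.iff_rank_lt_aleph0.2 this))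
  obtain ⟨W, hW⟩ := X.exists_isCompl
  have eW : (V ⧸ X) ≃ₗ[K] ↥W := Submodule.quotientEquivOfIsCompl X W hW
  have hrW : Module.rank K ↥W = Module.rank K ↥X := by
    rw [← eW.rank_eq, ← eX.rank_eq]
  -- bases
  set bX := Module.Basis.ofVectorSpace K ↥X with hbX
  set bW := Module.Basis.ofVectorSpace K ↥W with hbW
  set ιX := ↥(Module.Basis.ofVectorSpaceIndex K ↥X) with hιX
  set ιW := ↥(Module.Basis.ofVectorSpaceIndex K ↥W) with hιW
  have hmkX : #ιX = Module.rank K ↥X := bX.mk_eq_rank''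
  have hmkW : #ιW = Module.rank K ↥W := bW.mk_eq_rank''
  set v : ιX ⊕ ιW → V := Sum.elim (X.subtype ∘ bX) (W.subtype ∘ bW) with hvdef
  have hvX : LinearIndependent K (X.subtype ∘ bX) :=
    bX.linearIndependent.map' X.subtype X.ker_subtype
  have hvW : LinearIndependent K (W.subtype ∘ bW) :=
    bW.linearIndependent.map' W.subtype W.ker_subtype
  have hsX : span K (Set.range (X.subtype ∘ bX)) = X := by
    rw [Set.range_comp, Submodule.span_image, bX.span_eq, Submodule.map_top,
      Submodule.range_subtype]
  have hsW : span K (Set.range (W.subtype ∘ bW)) = W := by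
    rw [Set.range_comp, Submodule.span_image, bW.span_eq, Submodule.map_top,
      Submodule.range_subtype]
  have hv : LinearIndependent K v :=
    hvX.sum_type hvW (by rw [hsX, hsW]; exact hW.disjoint)
  have hXeq : span K (v '' Set.range Sum.inl) = X := by
    rw [← Set.range_comp]
    have : v ∘ Sum.inl = X.subtype ∘ bX := rfl
    rw [this, hsX]
  have hWeq : span K (v '' Set.range Sum.inr) = W := by
    rw [← Set.range_comp]
    have : v ∘ Sum.inr = W.subtype ∘ bW := rfl
    rw [this, hsW]
  have hspantop : span K (Set.range v) = ⊤ := by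
    rw [hvdef, Set.Sum.elim_range, Submodule.span_union, hsX, hsW]
    exact hW.codisjoint.eq_top
  -- embeddings
  have hde : ∀ (ι : Type v), #ι = Module.rank K ↥X → Nonempty (Fin d ↪ ι) := by
    intro ι hι
    have hle : (d : Cardinal.{v}) ≤ #ι := hι ▸ ((Cardinal.nat_lt_aleph0 d).le.trans hκ0)
    have h2 : Cardinal.lift.{v} #(Fin d) ≤ Cardinal.lift.{0} #ι := by
      rw [Cardinal.mk_fin, Cardinal.lift_natCast, Cardinal.lift_uzero]
      exact hle
    exact Cardinal.lift_mk_le'.mp h2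
  obtain ⟨e⟩ := hde ιX hmkX
  obtain ⟨f⟩ := hde ιW (hmkW.trans hrW)
  -- the chain of subspaces
  set Sk : ℕ → Set (ιX ⊕ ιW) := fun k =>
    (Sum.inl '' ((Set.univ : Set ιX) \ (e '' {i : Fin d | (i : ℕ) < k}))) ∪
    (Sum.inr '' (f '' {i : Fin d | (i : ℕ) < k})) with hSk
  set Ck : ℕ → Set (ιX ⊕ ιW) := fun k =>
    (Sum.inl '' (e '' {i : Fin d | (i : ℕ) < k})) ∪
    (Sum.inr '' ((Set.univ : Set ιW) \ (f '' {i : Fin d | (i : ℕ) < k}))) with hCk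
  set Yk : ℕ → Submodule K V := fun k => span K (v '' Sk k) with hYk
  set Zk : ℕ → Submodule K V := fun k => span K (v '' Ck k) with hZk
  have hdisjSC : ∀ k, Disjoint (Sk k) (Ck k) := by
    intro k
    rw [Set.disjoint_left]
    rintro x (⟨a, ⟨-, ha⟩, rfl⟩ | ⟨b, hb, rfl⟩)
    · rintro (⟨a', ha', h⟩ | ⟨b', hb', h⟩)
      · exact ha (Sum.inl_injective h ▸ ha')
      · exact Sum.inr_ne_inl h
    · rintro (⟨a', ha', h⟩ | ⟨b', ⟨-, hb'⟩, h⟩)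
      · exact Sum.inl_ne_inr h
      · exact hb' (Sum.inr_injective h ▸ hb)
  have hunionSC : ∀ k, Sk k ∪ Ck k = Set.univ := by
    intro k
    ext x
    simp only [Set.mem_union, Set.mem_univ, iff_true]
    cases x with
    | inl a =>
      by_cases ha : a ∈ e '' {i : Fin d | (i : ℕ) < k}
      · exact Or.inr (Or.inl ⟨a, ha, rfl⟩)
      · exact Or.inl (Or.inl ⟨a, ⟨trivial, ha⟩, rfl⟩)
    | inr b =>
      by_cases hb : b ∈ f '' {i : Fin d | (i : ℕ) < k}
      · exact Or.inl (Or.inr ⟨b, hb, rfl⟩)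
      · exact Or.inr (Or.inr ⟨b, ⟨trivial, hb⟩, rfl⟩)
  have hspan_union : ∀ s t : Set (ιX ⊕ ιW),
      span K (v '' (s ∪ t)) = span K (v '' s) ⊔ span K (v '' t) := by
    intro s t
    rw [Set.image_union, Submodule.span_union]
  have hfinim : ∀ {α : Type v} (g : Fin d → α) (s : Set (Fin d)), #(g '' s) < Cardinal.aleph0 := by
    intro α g s
    exact ((Set.toFinite s).image g).lt_aleph0
  have hdisj_inl_inr : ∀ (s : Set ιX) (t : Set ιW),
      Disjoint (Sum.inl '' s) ((Sum.inr '' t : Set (ιX ⊕ ιW))) := by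
    intro s t
    rw [Set.disjoint_left]
    rintro x ⟨a, -, rfl⟩ ⟨b, -, h⟩
    exact Sum.inr_ne_inl h
  have hdiffX : ∀ s : Set (Fin d), #((Set.univ : Set ιX) \ (e '' s) : Set ιX) = Module.rank K ↥X := by
    intro s
    have h1 := Cardinal.mk_diff_add_mk (Set.subset_univ (e '' s))
    rw [Cardinal.mk_univ, hmkX] at h1
    exact card_cancel h1 (hfinim e s) hκ0
  have hdiffW : ∀ s : Set (Fin d), #((Set.univ : Set ιW) \ (f '' s) : Set ιW) = Module.rank K ↥X := by
    intro s
    have h1 := Cardinal.mk_diff_add_mk (Set.subset_univ (f '' s))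
    rw [Cardinal.mk_univ, hmkW.trans hrW] at h1
    exact card_cancel h1 (hfinim f s) hκ0
  have hcardS : ∀ k, #(Sk k) = Module.rank K ↥X := by
    intro k
    rw [hSk]
    rw [Cardinal.mk_union_of_disjoint (hdisj_inl_inr _ _),
      Cardinal.mk_image_eq Sum.inl_injective, Cardinal.mk_image_eq Sum.inr_injective,
      hdiffX]
    exact Cardinal.add_eq_left hκ0 (((hfinim f _).trans_le hκ0).le)
  have hcardC : ∀ k, #(Ck k) = Module.rank K ↥X := by
    intro k
    rw [hCk]
    rw [Cardinal.mk_union_of_disjoint (hdisj_inl_inr _ _),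
      Cardinal.mk_image_eq Sum.inl_injective, Cardinal.mk_image_eq Sum.inr_injective,
      hdiffW]
    exact Cardinal.add_eq_right hκ0 (((hfinim e _).trans_le hκ0).le)
  have hcompl : ∀ k, IsCompl (Yk k) (Zk k) := by
    intro k
    constructor
    · exact span_disjoint hv (hdisjSC k)
    · rw [codisjoint_iff, hYk, hZk, ← hspan_union, hunionSC, Set.image_univ, hspantop]
  have hrankY : ∀ k, Module.rank K ↥(Yk k) = Module.rank K ↥X := by
    intro k
    rw [hYk, rank_span_image hv, hcardS]
  have hrankZ : ∀ k, Module.rank K ↥(Zk k) = Module.rank K ↥X := by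
    intro k
    rw [hZk, rank_span_image hv, hcardC]
  have hInG : ∀ k, InG K V (Yk k) := by
    intro k
    refine LinearEquiv.nonempty_equiv_iff_rank_eq.mpr ?_
    rw [hrankY, (Submodule.quotientEquivOfIsCompl _ _ (hcompl k)).rank_eq, hrankZ]
  -- the target subspace Y := Yk d
  set SA : Set (ιX ⊕ ιW) := Sum.inl '' ((Set.univ : Set ιX) \ (e '' Set.univ)) with hSA
  set SB : Set (ιX ⊕ ιW) := Sum.inl '' (e '' Set.univ) with hSB
  set ST : Set (ιX ⊕ ιW) := Sum.inr '' (f '' Set.univ) with hST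
  have hFud : {i : Fin d | (i : ℕ) < d} = Set.univ := by
    ext i; simp [i.isLt]
  have hSdeq : Sk d = SA ∪ ST := by
    rw [hSk]; simp only []; rw [hFud]
  have hA_le_X : span K (v '' SA) ≤ X :=
    le_of_le_of_eq (Submodule.span_mono (Set.image_mono (f := v) (Set.image_subset_range _ _))) hXeq
  have hB_le_X : span K (v '' SB) ≤ X :=
    le_of_le_of_eq (Submodule.span_mono (Set.image_mono (f := v) (Set.image_subset_range _ _))) hXeq
  have hT_le_W : span K (v '' ST) ≤ W :=
    le_of_le_of_eq (Submodule.span_mono (Set.image_mono (f := v) (Set.image_subset_range _ _))) hWeq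
  have hYd_eq : Yk d = span K (v '' SA) ⊔ span K (v '' ST) := by
    rw [hYk]; simp only []; rw [hSdeq, hspan_union]
  have hinf : X ⊓ Yk d = span K (v '' SA) := by
    rw [inf_comm, hYd_eq, sup_inf_assoc_of_le _ hA_le_X]
    have hbot : span K (v '' ST) ⊓ X = ⊥ := by
      rw [← le_bot_iff]
      calc span K (v '' ST) ⊓ X ≤ W ⊓ X := inf_le_inf_right X hT_le_W
        _ = ⊥ := by rw [inf_comm]; exact disjoint_iff.mp hW.disjoint
    rw [hbot, sup_bot_eq]
  have hXsplit : span K (v '' SA) ⊔ span K (v '' SB) = X := by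
    rw [← hspan_union]
    have : SA ∪ SB = Set.range Sum.inl := by
      rw [hSA, hSB, ← Set.image_union, Set.diff_union_of_subset (Set.subset_univ _),
        Set.image_univ]
    rw [this, hXeq]
  have hdisjAB : Disjoint SA SB :=
    Set.disjoint_image_of_injective Sum.inl_injective (Set.disjoint_sdiff_left)
  have hdisjAT : Disjoint SA ST := hdisj_inl_inr _ _
  have hquot1 : quotRank K V (Yk d) X = (d : Cardinal) := by
    rw [quotRank_inf_left, inf_comm, hinf,
      quotRank_of_compl hXsplit (span_disjoint hv hdisjAB), rank_span_image hv, hSB,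
      Cardinal.mk_image_eq Sum.inl_injective, mk_image_univ_fin e]
  have hquot2 : quotRank K V X (Yk d) = (d : Cardinal) := by
    rw [quotRank_inf_left, hinf,
      quotRank_of_compl hYd_eq.symm (span_disjoint hv hdisjAT), rank_span_image hv, hST,
      Cardinal.mk_image_eq Sum.inr_injective, mk_image_univ_fin f]
  -- the walk
  have hY0 : Yk 0 = X := by
    rw [hYk]
    simp only []
    rw [hSk]
    simp only []
    have h0 : {i : Fin d | (i : ℕ) < 0} = (∅ : Set (Fin d)) := by
      ext i; simp
    rw [h0]
    simp only [Set.image_empty, Set.diff_empty, Set.image_univ, Set.union_empty]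
    exact hXeq
  have hadj : ∀ k, k < d →
      (grassmannGraph K V).Adj ⟨Yk k, hInG k⟩ ⟨Yk (k + 1), hInG (k + 1)⟩ := by
    intro k hk
    set i0 : Fin d := ⟨k, hk⟩ with hi0
    have hsub1 : Sk (k + 1) ⊆ Sk k ∪ {Sum.inr (f i0)} := by
      rintro x (⟨a, ⟨-, ha⟩, rfl⟩ | ⟨b, ⟨i, hi, rfl⟩, rfl⟩)
      · refine Or.inl (Or.inl ⟨a, ⟨trivial, fun h => ha ?_⟩, rfl⟩)
        obtain ⟨i, hi, rfl⟩ := h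
        exact ⟨i, Nat.lt_succ_of_lt hi, rfl⟩
      · rcases Nat.lt_succ_iff_lt_or_eq.mp hi with h | h
        · exact Or.inl (Or.inr ⟨f i, ⟨i, h, rfl⟩, rfl⟩)
        · right
          have : i = i0 := Fin.ext h
          rw [this]
          rfl
    have hsub2 : Sk k ⊆ Sk (k + 1) ∪ {Sum.inl (e i0)} := by
      rintro x (⟨a, ⟨-, ha⟩, rfl⟩ | ⟨b, ⟨i, hi, rfl⟩, rfl⟩)
      · by_cases hae : a = e i0
        · exact Or.inr (by rw [hae]; rfl)
        · refine Or.inl (Or.inl ⟨a, ⟨trivial, fun h => ?_⟩, rfl⟩)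
          obtain ⟨i, hi, rfl⟩ := h
          rcases Nat.lt_succ_iff_lt_or_eq.mp hi with h' | h'
          · exact ha ⟨i, h', rfl⟩
          · exact hae (by rw [show i = i0 from Fin.ext (show (i : ℕ) = (i0 : ℕ) from h')])
      · exact Or.inl (Or.inr ⟨f i, ⟨i, Nat.lt_succ_of_lt hi, rfl⟩, rfl⟩)
    have hmem1 : Sum.inr (f i0) ∈ Sk (k + 1) :=
      Or.inr ⟨f i0, ⟨i0, Nat.lt_succ_self k, rfl⟩, rfl⟩
    have hmem2 : Sum.inl (e i0) ∈ Sk k := by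
      refine Or.inl ⟨e i0, ⟨trivial, fun h => ?_⟩, rfl⟩
      obtain ⟨i, hi, hie⟩ := h
      rw [e.injective hie] at hi
      exact absurd (hi : (k : ℕ) < k) (lt_irrefl k)
    have hnin1 : Sum.inr (f i0) ∉ Sk k := by
      rintro (⟨a, -, h⟩ | ⟨b, ⟨i, hi, rfl⟩, h⟩)
      · exact Sum.inl_ne_inr h
      · rw [hi0] at h
        have := f.injective (Sum.inr_injective h)
        rw [this] at hi
        exact absurd (hi : (k : ℕ) < k) (lt_irrefl k)
    have hnin2 : Sum.inl (e i0) ∉ Sk (k + 1) := by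
      rintro (⟨a, ⟨-, ha⟩, h⟩ | ⟨b, -, h⟩)
      · exact ha ⟨i0, by rw [← Sum.inl_injective h]; exact ⟨Nat.lt_succ_self k, rfl⟩⟩
      · exact Sum.inr_ne_inl h
    have hU1 : Sk k ∪ Sk (k + 1) = Sk k ∪ {Sum.inr (f i0)} := by
      apply Set.Subset.antisymm
      · exact Set.union_subset Set.subset_union_left hsub1
      · exact Set.union_subset Set.subset_union_left
          (Set.singleton_subset_iff.mpr (Or.inr hmem1))
    have hU2 : Sk k ∪ Sk (k + 1) = Sk (k + 1) ∪ {Sum.inl (e i0)} := by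
      apply Set.Subset.antisymm
      · exact Set.union_subset hsub2 Set.subset_union_left
      · exact Set.union_subset Set.subset_union_right
          (Set.singleton_subset_iff.mpr (Or.inl hmem2))
    have hrank1 : Module.rank K ↥(span K (v '' {Sum.inr (f i0)})) = 1 := by
      rw [rank_span_image hv, Cardinal.mk_singleton]
    have hrank2 : Module.rank K ↥(span K (v '' {Sum.inl (e i0)})) = 1 := by
      rw [rank_span_image hv, Cardinal.mk_singleton]
    have hsupeq : Yk k ⊔ Yk (k + 1) = span K (v '' (Sk k ∪ Sk (k + 1))) := by
      rw [hspan_union]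
    constructor
    · rw [hsupeq]
      have h1 : Yk k ⊔ span K (v '' {Sum.inr (f i0)}) = span K (v '' (Sk k ∪ Sk (k + 1))) := by
        rw [hU1, hspan_union]
      rw [quotRank_of_compl h1
        (span_disjoint hv (Set.disjoint_singleton_right.mpr hnin1)), hrank1]
    · rw [hsupeq]
      have h1 : Yk (k + 1) ⊔ span K (v '' {Sum.inl (e i0)}) =
          span K (v '' (Sk k ∪ Sk (k + 1))) := by
        rw [hU2, hspan_union]
      rw [quotRank_of_compl h1
        (span_disjoint hv (Set.disjoint_singleton_right.mpr hnin2)), hrank2]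
  have hvertex : (⟨X, hX⟩ : {A : Submodule K V // InG K V A}) = ⟨Yk 0, hInG 0⟩ :=
    Subtype.ext hY0.symm
  have hwalk : ∀ k, k ≤ d → ∃ p : (grassmannGraph K V).Walk ⟨X, hX⟩ ⟨Yk k, hInG k⟩,
      p.length = k := by
    intro k
    induction k with
    | zero =>
      intro _
      exact ⟨SimpleGraph.Walk.nil.copy hvertex.symm rfl, by simp⟩
    | succ k ih =>
      intro hk
      obtain ⟨p, hp⟩ := ih (Nat.le_of_succ_le hk)
      exact ⟨p.concat (hadj k (Nat.lt_of_succ_le hk)),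
        by rw [SimpleGraph.Walk.length_concat, hp]⟩
  obtain ⟨p, hp⟩ := hwalk d le_rfl
  have hreach : (grassmannGraph K V).Reachable ⟨X, hX⟩ ⟨Yk d, hInG d⟩ := ⟨p⟩
  refine ⟨Yk d, hInG d, hquot1, hquot2, hreach, ?_⟩
  apply le_antisymm
  · exact le_trans (SimpleGraph.dist_le p) (le_of_eq hp)
  · obtain ⟨q, hq⟩ := hreach.exists_walk_length_eq_dist
    have hle := quotRank_le_walk_length q
    rw [hquot2, hq] at hle
    exact_mod_cast hle

/-- For `V` infinite-dimensional: for every `X ∈ 𝒢` and every `d : ℕ` there is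
`Y ∈ 𝒢` with `dim (X/(X ∩ Y)) = dim (Y/(X ∩ Y)) = d`, whose graph distance from
`X` in the Grassmann graph equals `d`; consequently every connected component of
the Grassmann graph has infinite diameter. -/
theorem stmt_18 (K V : Type*) [DivisionRing K] [AddCommGroup V] [Module K V]
    (hV : ¬ FiniteDimensional K V) :
    (∀ X : Submodule K V, (hX : InG K V X) → ∀ d : ℕ,
      ∃ Y : Submodule K V, ∃ hY : InG K V Y,
        quotRank K V Y X = (d : ℕ) ∧ quotRank K V X Y = (d : ℕ) ∧
        (grassmannGraph K V).dist ⟨X, hX⟩ ⟨Y, hY⟩ = d) ∧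
    (∀ X : Submodule K V, (hX : InG K V X) → ∀ n : ℕ,
      ∃ Y : Submodule K V, ∃ hY : InG K V Y,
        (grassmannGraph K V).Reachable ⟨X, hX⟩ ⟨Y, hY⟩ ∧
        n ≤ (grassmannGraph K V).dist ⟨X, hX⟩ ⟨Y, hY⟩) := by
  constructor
  · intro X hX d
    obtain ⟨Y, hY, h1, h2, _, h4⟩ := exists_Y hV X hX d
    exact ⟨Y, hY, h1, h2, h4⟩
  · intro X hX n
    obtain ⟨Y, hY, _, _, h3, h4⟩ := exists_Y hV X hX n
    exact ⟨Y, hY, h3, le_of_eq h4.symm⟩
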